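/- Let c1,...,c6 be real constants with c6 ≠ 0 and c1² + 6·c2·c6 < 0, and suppose h : ℝ → ℝ is differentiable, never zero, with 2·h(z)·(3·c6·h(z) + c1) − c2 > 0 for all z, and satisfies the implicit relation Real.log(2·h(z)·(3·c6·h(z) + c1) − c2) − 2·Real.log|h(z)| + (2·c1/√(−c1² − 6·c2·c6))·arctan((6·c6·h(z) + c1)/√(−c1² − 6·c2·c6)) = −2·c2·z + c0 for all z, where c0 is a constant. Then h satisfies the Abel equation h'(z) = −6·c6·h(z)³ − 2·c1·h(z)² + c2·h(z) for all z. -/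

import Mathlib

theorem stmt_13 (c1 c2 c3 c4 c5 c6 c0 : ℝ) (hc6 : c6 ≠ 0)
    (hdisc : c1 ^ 2 + 6 * c2 * c6 < 0)
    (h : ℝ → ℝ) (hdiff : Differentiable ℝ h) (hne : ∀ z : ℝ, h z ≠ 0)
    (hpos : ∀ z : ℝ, 0 < 2 * h z * (3 * c6 * h z + c1) - c2)
    (himp : ∀ z : ℝ,
      Real.log (2 * h z * (3 * c6 * h z + c1) - c2) - 2 * Real.log |h z|
        + (2 * c1 / Real.sqrt (-c1 ^ 2 - 6 * c2 * c6))
          * Real.arctan ((6 * c6 * h z + c1) / Real.sqrt (-c1 ^ 2 - 6 * c2 * c6))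
        = -2 * c2 * z + c0) :
    ∀ z : ℝ, deriv h z = -6 * c6 * (h z) ^ 3 - 2 * c1 * (h z) ^ 2 + c2 * h z := by
  intro z
  set s := Real.sqrt (-c1 ^ 2 - 6 * c2 * c6) with hsdef
  have hargpos : 0 < -c1 ^ 2 - 6 * c2 * c6 := by nlinarith
  have hs2 : s ^ 2 = -c1 ^ 2 - 6 * c2 * c6 := Real.sq_sqrt hargpos.le
  have hspos : 0 < s := Real.sqrt_pos.mpr hargpos
  have hsne : s ≠ 0 := hspos.ne'
  have hc2 : c2 ≠ 0 := by
    intro h0; rw [h0] at hdisc; nlinarith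
  set y := h z with hy
  have hyne : y ≠ 0 := hne z
  have hP : 0 < 2 * y * (3 * c6 * y + c1) - c2 := hpos z
  have hPne : 2 * y * (3 * c6 * y + c1) - c2 ≠ 0 := hP.ne'
  set y' := deriv h z with hy'
  have hd : HasDerivAt h y' z := (hdiff z).hasDerivAt
  -- derivative of the inner quadratic
  have hu : HasDerivAt (fun z => 2 * h z * (3 * c6 * h z + c1) - c2)
      (2 * y' * (3 * c6 * y + c1) + 2 * y * (3 * c6 * y')) z := by
    have := ((hd.const_mul 2).mul ((hd.const_mul (3 * c6)).add_const c1)).sub_const c2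
    simpa [mul_comm, mul_assoc, mul_left_comm] using this
  have hlog1 : HasDerivAt (fun z => Real.log (2 * h z * (3 * c6 * h z + c1) - c2))
      ((2 * y' * (3 * c6 * y + c1) + 2 * y * (3 * c6 * y')) /
        (2 * y * (3 * c6 * y + c1) - c2)) z := hu.log hPne
  have hlog2 : HasDerivAt (fun z => Real.log |h z|) (y' / y) z := by
    have he : (fun z => Real.log |h z|) = fun z => Real.log (h z) := by
      funext w; rw [Real.log_abs]
    rw [he]; exact hd.log hyne
  have hinner : HasDerivAt (fun z => (6 * c6 * h z + c1) / s) (6 * c6 * y' / s) z :=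
    ((hd.const_mul (6 * c6)).add_const c1).div_const s
  have harct : HasDerivAt (fun z => Real.arctan ((6 * c6 * h z + c1) / s))
      (1 / (1 + ((6 * c6 * y + c1) / s) ^ 2) * (6 * c6 * y' / s)) z := hinner.arctan
  have hL : HasDerivAt (fun z =>
      Real.log (2 * h z * (3 * c6 * h z + c1) - c2) - 2 * Real.log |h z|
        + (2 * c1 / s) * Real.arctan ((6 * c6 * h z + c1) / s))
      ((2 * y' * (3 * c6 * y + c1) + 2 * y * (3 * c6 * y')) /
        (2 * y * (3 * c6 * y + c1) - c2) - 2 * (y' / y)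
        + (2 * c1 / s) * (1 / (1 + ((6 * c6 * y + c1) / s) ^ 2) * (6 * c6 * y' / s))) z :=
    (hlog1.sub (hlog2.const_mul 2)).add (harct.const_mul (2 * c1 / s))
  have hR : HasDerivAt (fun z : ℝ =>
      Real.log (2 * h z * (3 * c6 * h z + c1) - c2) - 2 * Real.log |h z|
        + (2 * c1 / s) * Real.arctan ((6 * c6 * h z + c1) / s)) (-2 * c2) z := by
    have he : (fun z : ℝ =>
        Real.log (2 * h z * (3 * c6 * h z + c1) - c2) - 2 * Real.log |h z|
          + (2 * c1 / s) * Real.arctan ((6 * c6 * h z + c1) / s))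
        = fun z : ℝ => -2 * c2 * z + c0 := funext himp
    rw [he]
    simpa using ((hasDerivAt_id z).const_mul (-2 * c2)).add_const c0
  have heq := hL.unique hR
  have hNpos : 0 < 1 + ((6 * c6 * y + c1) / s) ^ 2 := by positivity
  have hNne := hNpos.ne'
  field_simp at heq
  have hfac : s ^ 2 * (6 * c6) * (2 * y * (3 * c6 * y + c1) - c2) * (2 * c2) *
      (y' - (-6 * c6 * y ^ 3 - 2 * c1 * y ^ 2 + c2 * y)) = 0 := by
    linear_combination 2 * s ^ 2 * heq - (((2 * c2 - 2 * c1 * y) * y' +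
      2 * c2 * y * (2 * y * (3 * c6 * y + c1) - c2)) * s ^ 2) * hs2
  have hK : s ^ 2 * (6 * c6) * (2 * y * (3 * c6 * y + c1) - c2) * (2 * c2) ≠ 0 := by
    apply mul_ne_zero (mul_ne_zero (mul_ne_zero (pow_ne_zero 2 hsne) _) hPne)
    · simpa using hc2
    · simpa using hc6
  have := (mul_eq_zero.mp hfac).resolve_left hK
  linarith [this]
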